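/- arXiv:1602.06744 — 11 statements merged into one kernel-verified Lean document; each statement's English description precedes it below -/
import Mathlib

section
/- For the hyperboloid H: x²/a² + y²/a² − z²/c² = 1 with matrix H = diag(a⁻², a⁻², −c⁻², −1) and the sphere S of radius r centered at (x_c, y_c, z_c) with matrix S = [[1,0,0,−x_c],[0,1,0,−y_c],[0,0,1,−z_c],[−x_c,−y_c,−z_c, x_c²+y_c²+z_c²−r²]], the characteristic polynomial f(λ) = det(λH + S) factors as f(λ) = (a² + λ)·g(λ)/(a⁴c²), where g(λ) = −(a² + λ)[(c² − λ)(r² + λ) + z_c²λ] + λ(c² − λ)(x_c² + y_c²). In particular, λ = −a² is always a root of f. -/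
open Matrix

/-- Matrix of the circular hyperboloid of one sheet `x²/a² + y²/a² − z²/c² = 1`. -/
noncomputable def Hmat (a c : ℝ) : Matrix (Fin 4) (Fin 4) ℝ :=
  !![1/a^2, 0, 0, 0; 0, 1/a^2, 0, 0; 0, 0, -(1/c^2), 0; 0, 0, 0, -1]

/-- Matrix of the sphere of radius `r` centered at `(xc, yc, zc)`. -/
noncomputable def Smat (r xc yc zc : ℝ) : Matrix (Fin 4) (Fin 4) ℝ :=
  !![1, 0, 0, -xc; 0, 1, 0, -yc; 0, 0, 1, -zc;
     -xc, -yc, -zc, xc^2 + yc^2 + zc^2 - r^2]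

/-- The characteristic polynomial `f(λ) = det (λ H + S)` as a function of `λ`. -/
noncomputable def fval (a c r xc yc zc l : ℝ) : ℝ :=
  (l • Hmat a c + Smat r xc yc zc).det

/-- The cubic factor `g`. -/
noncomputable def gval (a c r xc yc zc l : ℝ) : ℝ :=
  -(a^2 + l) * ((c^2 - l) * (r^2 + l) + zc^2 * l) + l * (c^2 - l) * (xc^2 + yc^2)

theorem stmt0 (a c r xc yc zc : ℝ) (ha : 0 < a) (hc : 0 < c) (hr : 0 < r) :
    (∀ l : ℝ, fval a c r xc yc zc l = (a^2 + l) * gval a c r xc yc zc l / (a^4 * c^2)) ∧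
    fval a c r xc yc zc (-a^2) = 0 := by
  have ha' : a ≠ 0 := ha.ne'
  have hc' : c ≠ 0 := hc.ne'
  have key : ∀ l : ℝ, fval a c r xc yc zc l = (a^2 + l) * gval a c r xc yc zc l / (a^4 * c^2) := by
    intro l
    simp only [fval, gval, Hmat, Smat]
    have h32 : Fin.succAbove (3 : Fin 4) (2 : Fin 3) = 2 := by decide
    simp [Matrix.det_succ_row_zero, Fin.sum_univ_succ, Fin.castSucc, Fin.castAdd, Fin.castLE, Matrix.cons_val_succ, h32]
    field_simp
    ring
  exact ⟨key, by rw [key]; ring⟩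
end

section
/- The product of the four roots (with multiplicity) of the degree-4 characteristic polynomial f(λ) = det(λH + S), after normalizing f to be monic up to sign, equals −a⁴c²r² < 0; equivalently, the constant coefficient of the monic polynomial a⁴c²·f(λ) is −a⁴c²r². Consequently f has at least one positive real root. -/
open Matrix Polynomial

/-- `f(λ) = det (λ H + S)` as a polynomial in `λ`. -/
noncomputable def fpoly (a c r xc yc zc : ℝ) : Polynomial ℝ :=
  ((X : Polynomial ℝ) • (Hmat a c).map C + (Smat r xc yc zc).map C).det

lemma fval_eq (a c r xc yc zc l : ℝ) :
    fval a c r xc yc zc l =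
      (l/a^2+1)^2 * ((l/c^2 - 1)*(l + r^2 - (xc^2+yc^2+zc^2)) - zc^2)
        + (l/a^2+1)*(l/c^2 - 1)*(xc^2+yc^2) := by
  simp [fval, Hmat, Smat, Matrix.det_succ_row_zero, Fin.sum_univ_succ, Fin.castSucc,
    Fin.castAdd, Fin.castLE, Fin.succAbove]
  ring

lemma fval_zero (a c r xc yc zc : ℝ) : fval a c r xc yc zc 0 = -r^2 := by
  rw [fval_eq]; ring

lemma fpoly_coeff_zero (a c r xc yc zc : ℝ) : (fpoly a c r xc yc zc).coeff 0 = -r^2 := by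
  rw [Polynomial.coeff_zero_eq_eval_zero]
  have : (fpoly a c r xc yc zc).eval 0 = (Smat r xc yc zc).det := by
    rw [fpoly, ← Polynomial.coe_evalRingHom, RingHom.map_det]
    congr 1
    ext i j
    simp [Matrix.map_apply, Matrix.add_apply, Matrix.smul_apply]
  rw [this]
  simp [Smat, Matrix.det_succ_row_zero, Fin.sum_univ_succ, Fin.castSucc, Fin.castAdd, Fin.castLE,
    Fin.succAbove]
  ring

lemma exists_pos_root (a c r xc yc zc : ℝ) (ha : 0 < a) (hc : 0 < c) (hr : 0 < r) :
    ∃ l : ℝ, 0 < l ∧ fval a c r xc yc zc l = 0 := by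
  set L : ℝ := (c^2+1) * (1 + xc^2 + yc^2 + zc^2 + zc^2) with hL
  have hL0 : 0 < L := by positivity
  have ha2 : (0:ℝ) < a^2 := by positivity
  have hc2 : (0:ℝ) < c^2 := by positivity
  have hfL : 0 < fval a c r xc yc zc L := by
    rw [fval_eq]
    have h1 : L/a^2 + 1 > 0 := by positivity
    have hq : L/c^2 - 1 = xc^2+yc^2+zc^2+zc^2 + (1 + xc^2+yc^2+zc^2+zc^2)/c^2 := by
      field_simp; ring
    have hq0 : L/c^2 - 1 > zc^2 := by
      rw [hq]
      have h2 : (1 + xc^2+yc^2+zc^2+zc^2)/c^2 > 0 := by positivity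
      nlinarith [sq_nonneg xc, sq_nonneg yc, sq_nonneg zc]
    have hs : L + r^2 - (xc^2+yc^2+zc^2) ≥ 1 := by
      have : L ≥ 1 + xc^2 + yc^2 + zc^2 + zc^2 := by nlinarith [sq_nonneg c]
      nlinarith [sq_nonneg zc, sq_nonneg r]
    have hQpos : (0:ℝ) < L/c^2 - 1 := lt_of_le_of_lt (sq_nonneg zc) hq0
    have hQS : (L/c^2 - 1) * (L + r^2 - (xc^2+yc^2+zc^2)) - zc^2 > 0 := by
      nlinarith
    have t1 : 0 < (L/a^2+1)^2 * ((L/c^2 - 1)*(L + r^2 - (xc^2+yc^2+zc^2)) - zc^2) := by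
      positivity
    have t2 : 0 ≤ (L/a^2+1)*(L/c^2 - 1)*(xc^2+yc^2) := by positivity
    linarith
  have hcont : ContinuousOn (fval a c r xc yc zc) (Set.Icc 0 L) := by
    have : (fval a c r xc yc zc) = fun l =>
        (l/a^2+1)^2 * ((l/c^2 - 1)*(l + r^2 - (xc^2+yc^2+zc^2)) - zc^2)
        + (l/a^2+1)*(l/c^2 - 1)*(xc^2+yc^2) := funext (fval_eq a c r xc yc zc)
    rw [this]; fun_prop
  have h0 : fval a c r xc yc zc 0 = -r^2 := fval_zero a c r xc yc zc
  have hmem : (0:ℝ) ∈ Set.Ioc (fval a c r xc yc zc 0) (fval a c r xc yc zc L) :=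
    ⟨by rw [h0]; exact neg_lt_zero.mpr (by positivity), hfL.le⟩
  obtain ⟨l, hl, hfl⟩ := intermediate_value_Ioc hL0.le hcont hmem
  exact ⟨l, hl.1, hfl⟩

theorem stmt2 (a c r xc yc zc : ℝ) (ha : 0 < a) (hc : 0 < c) (hr : 0 < r) :
    ((C (a^4 * c^2)) * fpoly a c r xc yc zc).coeff 0 = -(a^4 * c^2 * r^2) ∧
    -(a^4 * c^2 * r^2) < 0 ∧
    ∃ l : ℝ, 0 < l ∧ fval a c r xc yc zc l = 0 := by
  refine ⟨?_, ?_, exists_pos_root a c r xc yc zc ha hc hr⟩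
  · rw [Polynomial.coeff_C_mul, fpoly_coeff_zero]; ring
  · have : 0 < a^4 * c^2 * r^2 := by positivity
    linarith
end

section
/- −a² is a multiple root (multiplicity ≥ 2) of the characteristic polynomial f(λ) = det(λH + S) if and only if x_c = y_c = 0. -/
set_option maxRecDepth 10000

open Matrix Polynomial

noncomputable def Gpoly (a c r xc yc zc : ℝ) : Polynomial ℝ :=
  X^3 + C (a^2 - c^2 + r^2 - zc^2 - (xc^2 + yc^2)) * X^2 +
    C ((xc^2 + yc^2)*c^2 - c^2*r^2 - a^2*(c^2 - r^2 + zc^2)) * X + C (-(a^2*c^2*r^2))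

theorem fpoly_eval (a c r xc yc zc x : ℝ) :
    eval x (fpoly a c r xc yc zc) = (x • Hmat a c + Smat r xc yc zc).det := by
  unfold fpoly
  rw [← coe_evalRingHom, RingHom.map_det, RingHom.mapMatrix_apply]
  congr 1
  ext i j
  simp only [Matrix.map_apply, Matrix.smul_apply, Matrix.add_apply, coe_evalRingHom,
    smul_eq_mul, eval_add, eval_mul, eval_X, eval_C]
  try ring

lemma finCastSucc2 : (Fin.castSucc 2 : Fin 4) = 2 := rfl

lemma finSuccAbove32 : (Fin.succAbove (3 : Fin 4) (2 : Fin 3)) = 2 := by decide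

theorem key (a c r xc yc zc : ℝ) (ha : a ≠ 0) (hc : c ≠ 0) :
    C (a^4*c^2) * fpoly a c r xc yc zc = (X + C (a^2)) * Gpoly a c r xc yc zc := by
  apply Polynomial.funext
  intro x
  rw [eval_mul, eval_mul, fpoly_eval]
  simp only [Gpoly, eval_add, eval_mul, eval_pow, eval_C, eval_X]
  show a^4*c^2 * (x • Hmat a c + Smat r xc yc zc).det = _
  simp [Matrix.det_succ_row_zero, Fin.sum_univ_succ, Hmat, Smat, Matrix.smul_apply,
    Matrix.add_apply, finCastSucc2, finSuccAbove32]
  field_simp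
  ring

theorem stmt3 (a c r xc yc zc : ℝ) (ha : 0 < a) (hc : 0 < c) (hr : 0 < r) :
    2 ≤ (fpoly a c r xc yc zc).rootMultiplicity (-a^2) ↔ xc = 0 ∧ yc = 0 := by
  have hk : (a^4*c^2 : ℝ) ≠ 0 := by positivity
  have hG0 : Gpoly a c r xc yc zc ≠ 0 := by
    intro h
    have h0 : eval 0 (Gpoly a c r xc yc zc) = 0 := by rw [h]; simp
    simp [Gpoly] at h0
    rcases h0 with (h0 | h0) | h0 <;> linarith
  have hXa : (X + C (a^2) : Polynomial ℝ) ≠ 0 := by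
    intro h
    have : eval (1 - a^2) (X + C (a^2) : Polynomial ℝ) = 0 := by rw [h]; simp
    simp at this
  have hprod : (X + C (a^2)) * Gpoly a c r xc yc zc ≠ 0 := mul_ne_zero hXa hG0
  have hkey := key a c r xc yc zc ha.ne' hc.ne'
  have hf0 : fpoly a c r xc yc zc ≠ 0 := by
    intro h; rw [h, mul_zero] at hkey; exact hprod hkey.symm
  have hCk : (C (a^4*c^2) : Polynomial ℝ) ≠ 0 := by
    simpa using hk
  have hm : rootMultiplicity (-a^2) (C (a^4*c^2) * fpoly a c r xc yc zc)
      = rootMultiplicity (-a^2) (fpoly a c r xc yc zc) := by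
    rw [Polynomial.rootMultiplicity_mul (mul_ne_zero hCk hf0),
      Polynomial.rootMultiplicity_C, zero_add]
  have hm2 : rootMultiplicity (-a^2) ((X + C (a^2)) * Gpoly a c r xc yc zc)
      = 1 + rootMultiplicity (-a^2) (Gpoly a c r xc yc zc) := by
    rw [Polynomial.rootMultiplicity_mul hprod]
    congr 1
    have h1 : (X + C (a^2) : Polynomial ℝ) = X - C (-(a^2)) := by
      rw [map_neg, sub_neg_eq_add]
    rw [h1, Polynomial.rootMultiplicity_X_sub_C_self]
  rw [← hm, hkey, hm2]
  have hroot : eval (-a^2) (Gpoly a c r xc yc zc)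
      = -(a^2) * (xc^2 + yc^2) * (a^2 + c^2) := by
    simp [Gpoly]; ring
  constructor
  · intro h
    have hpos : 0 < rootMultiplicity (-a^2) (Gpoly a c r xc yc zc) := by omega
    have hr0 : IsRoot (Gpoly a c r xc yc zc) (-a^2) :=
      (Polynomial.rootMultiplicity_pos hG0).mp hpos
    rw [IsRoot, hroot] at hr0
    have ha2 : (0:ℝ) < a^2 := by positivity
    have hc2 : (0:ℝ) < a^2 + c^2 := by positivity
    have hK : xc^2 + yc^2 = 0 := by nlinarith [mul_pos ha2 hc2, sq_nonneg xc, sq_nonneg yc]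
    have hx2 : xc^2 = 0 := by nlinarith [sq_nonneg xc, sq_nonneg yc]
    have hy2 : yc^2 = 0 := by nlinarith [sq_nonneg xc, sq_nonneg yc]
    exact ⟨sq_eq_zero_iff.mp hx2, sq_eq_zero_iff.mp hy2⟩
  · rintro ⟨hx, hy⟩
    have hr0 : IsRoot (Gpoly a c r xc yc zc) (-a^2) := by
      rw [IsRoot, hroot, hx, hy]; ring
    have := (Polynomial.rootMultiplicity_pos hG0).mpr hr0
    omega
end

section
/- Suppose x_c = y_c = 0. Then −a² is a triple root of the characteristic polynomial f(λ) = det(λH + S) if and only if r² = a² + a²z_c²/(a² + c²). -/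
open Matrix Polynomial

set_option maxRecDepth 10000 in
set_option maxHeartbeats 1000000 in
lemma fpoly_eq (a c r zc : ℝ) (ha : a ≠ 0) (hc : c ≠ 0) :
    fpoly a c r 0 0 zc = C (1/(a^4*c^2)) * ((X + C (a^2))^2 *
      (X^2 - C (c^2+zc^2-r^2) * X - C (c^2*r^2))) := by
  apply Polynomial.funext
  intro x
  unfold fpoly Hmat Smat
  simp [Matrix.det_succ_row_zero, Fin.sum_univ_succ, Matrix.smul_apply, Matrix.map_apply,
    smul_eq_mul, Fin.succ_succAbove_zero]
  field_simp
  ring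

theorem stmt4 (a c r zc : ℝ) (ha : 0 < a) (hc : 0 < c) (hr : 0 < r) :
    (fpoly a c r 0 0 zc).rootMultiplicity (-a^2) = 3 ↔
      r^2 = a^2 + a^2 * zc^2 / (a^2 + c^2) := by
  have ha0 : a ≠ 0 := ha.ne'
  have hc0 : c ≠ 0 := hc.ne'
  have hac : a^2 + c^2 ≠ 0 := by positivity
  set q : Polynomial ℝ := X^2 - C (c^2+zc^2-r^2) * X - C (c^2*r^2) with hq
  have hXa : (X + C (a^2) : Polynomial ℝ) = X - C (-a^2) := by
    rw [map_neg, sub_neg_eq_add]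
  have hqne : q ≠ 0 := by
    intro h
    have h2 := congrArg (fun p => Polynomial.coeff p 2) h
    simp [hq, coeff_X_pow, ← map_pow, ← _root_.map_mul, coeff_C] at h2
  have hCne : (C (1/(a^4*c^2)) : Polynomial ℝ) ≠ 0 := by
    rw [Ne, C_eq_zero]
    positivity
  have hXne : ((X + C (a^2))^2 : Polynomial ℝ) ≠ 0 := by
    rw [hXa]
    exact pow_ne_zero _ (X_sub_C_ne_zero _)
  have hrm : (fpoly a c r 0 0 zc).rootMultiplicity (-a^2) = 2 + q.rootMultiplicity (-a^2) := by
    rw [fpoly_eq a c r zc ha0 hc0, ← hq,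
      rootMultiplicity_mul (mul_ne_zero hCne (mul_ne_zero hXne hqne)),
      rootMultiplicity_mul (mul_ne_zero hXne hqne), rootMultiplicity_C, hXa,
      rootMultiplicity_X_sub_C_pow]
    omega
  rw [hrm]
  constructor
  · intro h
    have h1 : q.rootMultiplicity (-a^2) = 1 := by omega
    have hroot : q.IsRoot (-a^2) := by
      by_contra hnr
      rw [rootMultiplicity_eq_zero hnr] at h1
      simp at h1
    have he : (-a^2)^2 - (c^2+zc^2-r^2)*(-a^2) - c^2*r^2 = 0 := by
      simpa [hq] using hroot
    field_simp
    linear_combination -he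
  · intro h
    have hc' : r^2 * (a^2+c^2) = a^2*(a^2+c^2) + a^2*zc^2 := by
      field_simp at h
      linarith [h]
    have hfac : q = (X - C (-a^2)) * (X - C (c^2*r^2/a^2)) := by
      apply Polynomial.funext
      intro y
      simp [hq]
      field_simp
      ring_nf
      linear_combination y * hc'
    have : q.rootMultiplicity (-a^2) = 1 := by
      rw [hfac, rootMultiplicity_mul (mul_ne_zero (X_sub_C_ne_zero _) (X_sub_C_ne_zero _)),
        rootMultiplicity_X_sub_C, rootMultiplicity_X_sub_C]
      have hne : (-a^2 : ℝ) ≠ c^2*r^2/a^2 := by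
        have h1 : (0:ℝ) < c^2*r^2/a^2 := by positivity
        nlinarith [sq_nonneg a]
      simp [hne]
    omega
end

section
/- If x_c = y_c = 0, then all four roots of f(λ) = det(λH + S) are real: −a² is a root of multiplicity at least 2, and the other two roots are λ_± = (c² − r² + z_c² ± √((c² − r² + z_c²)² + 4c²r²))/2, which are real and distinct with λ_+ > 0 and λ_− < 0. -/
open Matrix Polynomial

lemma fpoly_fac (a c r zc : ℝ) :
    fpoly a c r 0 0 zc = (X * C (1/a^2) + 1)^2 *
      (C (1/c^2) * X^2 - (1 + C (1/c^2) * C (zc^2 - r^2)) * X - C (r^2)) := by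
  unfold fpoly Hmat Smat
  simp [Matrix.det_succ_row_zero, Fin.sum_univ_succ, Matrix.smul_apply, smul_eq_mul]
  ring

lemma fval_fac (a c r zc l : ℝ) :
    fval a c r 0 0 zc l = (l * (1/a^2) + 1)^2 *
      ((1/c^2) * l^2 - (1 + (1/c^2) * (zc^2 - r^2)) * l - r^2) := by
  unfold fval Hmat Smat
  simp [Matrix.det_succ_row_zero, Fin.sum_univ_succ, Matrix.smul_apply, smul_eq_mul]
  ring

lemma quad_root (c r zc q : ℝ) (hsq : q^2 = (c^2 - r^2 + zc^2)^2 + 4*c^2*r^2)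
    (hc : c ≠ 0) (ε : ℝ) (hε : ε = 1 ∨ ε = -1) :
    (1/c^2) * ((c^2-r^2+zc^2+ε*q)/2)^2 -
      (1+(1/c^2)*(zc^2-r^2)) * ((c^2-r^2+zc^2+ε*q)/2) - r^2 = 0 := by
  have hε2 : ε^2 = 1 := by rcases hε with h | h <;> rw [h] <;> norm_num
  field_simp
  linear_combination (ε^2)*hsq + (((c^2 - r^2 + zc^2)^2 + 4*c^2*r^2))*hε2

theorem stmt5 (a c r zc : ℝ) (ha : 0 < a) (hc : 0 < c) (hr : 0 < r) :
    2 ≤ (fpoly a c r 0 0 zc).rootMultiplicity (-a^2) ∧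
    (let lp : ℝ := (c^2 - r^2 + zc^2 + Real.sqrt ((c^2 - r^2 + zc^2)^2 + 4*c^2*r^2)) / 2
     let lm : ℝ := (c^2 - r^2 + zc^2 - Real.sqrt ((c^2 - r^2 + zc^2)^2 + 4*c^2*r^2)) / 2
     fval a c r 0 0 zc lp = 0 ∧ fval a c r 0 0 zc lm = 0 ∧
       0 < lp ∧ lm < 0 ∧ lm ≠ lp) := by
  have ha' : a ≠ 0 := ne_of_gt ha
  have hc' : c ≠ 0 := ne_of_gt hc
  have hr' : r ≠ 0 := ne_of_gt hr
  constructor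
  · -- root multiplicity
    have hne : fpoly a c r 0 0 zc ≠ 0 := by
      intro h
      have h0 := congrArg (Polynomial.eval 0) h
      rw [fpoly_fac] at h0
      simp at h0
      exact hr' h0
    rw [Polynomial.le_rootMultiplicity_iff hne]
    have hmul : (1/a^2) * (-a^2) = -1 := by field_simp
    have hfac2 : (X * C (1/a^2) + 1 : Polynomial ℝ) = C (1/a^2) * (X - C (-a^2)) := by
      rw [mul_sub, ← C_mul, hmul, map_neg, C_1]
      ring
    refine ⟨C (1/a^2)^2 * (C (1/c^2) * X^2 - (1 + C (1/c^2) * C (zc^2 - r^2)) * X - C (r^2)), ?_⟩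
    rw [fpoly_fac, hfac2]
    ring
  · -- roots
    dsimp only
    set q := Real.sqrt ((c^2 - r^2 + zc^2)^2 + 4*c^2*r^2) with hqdef
    have hD0 : (0:ℝ) ≤ (c^2 - r^2 + zc^2)^2 + 4*c^2*r^2 := by positivity
    have hsq : q^2 = (c^2 - r^2 + zc^2)^2 + 4*c^2*r^2 := Real.sq_sqrt hD0
    have hDgt : (c^2 - r^2 + zc^2)^2 < (c^2 - r^2 + zc^2)^2 + 4*c^2*r^2 := by
      have h4 : (0:ℝ) < 4*c^2*r^2 := by positivity
      linarith
    have hq0 : 0 < q := by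
      rw [hqdef]
      exact Real.sqrt_pos.mpr (lt_of_le_of_lt (sq_nonneg _) hDgt)
    have habs : |c^2 - r^2 + zc^2| < q := by
      rw [hqdef, ← Real.sqrt_sq_eq_abs]
      exact Real.sqrt_lt_sqrt (sq_nonneg _) hDgt
    have habs' := abs_lt.mp habs
    refine ⟨?_, ?_, by linarith [habs'.2], by linarith [habs'.1], fun h => by linarith⟩
    · rw [fval_fac]
      have h0 := quad_root c r zc q hsq hc' 1 (Or.inl rfl)
      rw [one_mul] at h0
      exact mul_eq_zero_of_right _ h0
    · rw [fval_fac]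
      have h0 := quad_root c r zc q hsq hc' (-1) (Or.inr rfl)
      rw [neg_one_mul, ← sub_eq_add_neg] at h0
      exact mul_eq_zero_of_right _ h0
end

section
/- Suppose z_c = 0. Then c² is a multiple root (multiplicity ≥ 2) of f(λ) = det(λH + S) if and only if r² = −c² + c²(x_c² + y_c²)/(a² + c²). Moreover, in this case c² is a triple root if and only if c² = a·r. -/
open Matrix Polynomial

set_option maxHeartbeats 1000000 in
lemma fpoly_eq_aux (a c r xc yc : ℝ) (ha : a ≠ 0) (hc : c ≠ 0) :
    fpoly a c r xc yc 0 =
      C (-(1/(c^2*a^4))) * ((X - C (c^2)) * ((X + C (a^2)) *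
        (C (-(a^2*r^2)) + C (xc^2+yc^2-r^2-a^2) * X - X^2))) := by
  apply Polynomial.funext; intro x
  have h1 : eval x (fpoly a c r xc yc 0)
      = ((x • Hmat a c + Smat r xc yc 0)).det := by
    rw [fpoly, ← Polynomial.coe_evalRingHom, RingHom.map_det]
    congr 1
    ext i j
    simp only [RingHom.mapMatrix_apply, Matrix.map_apply, Matrix.add_apply,
      Matrix.smul_apply, smul_eq_mul, eval_add, eval_mul, eval_X, eval_C,
      coe_evalRingHom]
  rw [h1]
  have hcs : (Fin.castSucc 2 : Fin 4) = 2 := rfl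
  have hsa : (Fin.succAbove (3 : Fin 4) (2 : Fin 3)) = 2 := rfl
  simp only [Hmat, Smat]
  simp [Matrix.det_succ_row_zero, Fin.sum_univ_succ, Matrix.smul_apply, smul_eq_mul, hcs, hsa]
  field_simp
  ring

set_option maxHeartbeats 800000 in
theorem stmt7 (a c r xc yc : ℝ) (ha : 0 < a) (hc : 0 < c) (hr : 0 < r) :
    (2 ≤ (fpoly a c r xc yc 0).rootMultiplicity (c^2) ↔
      r^2 = -c^2 + c^2 * (xc^2 + yc^2) / (a^2 + c^2)) ∧
    (r^2 = -c^2 + c^2 * (xc^2 + yc^2) / (a^2 + c^2) →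
      ((fpoly a c r xc yc 0).rootMultiplicity (c^2) = 3 ↔ c^2 = a * r)) := by
  have ha0 : a ≠ 0 := ne_of_gt ha
  have hc0 : c ≠ 0 := ne_of_gt hc
  set Q : ℝ[X] := C (-(a^2*r^2)) + C (xc^2+yc^2-r^2-a^2) * X - X^2 with hQdef
  have hfac := fpoly_eq_aux a c r xc yc ha0 hc0
  have hk : (-(1/(c^2*a^4)) : ℝ) ≠ 0 := neg_ne_zero.mpr (by positivity)
  have hQ0 : Q ≠ 0 := by
    intro h0
    have := congrArg (fun p => coeff p 2) (hQdef ▸ h0)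
    simp only [coeff_sub, coeff_add, coeff_C_mul, coeff_C, coeff_X, coeff_X_pow,
      coeff_zero] at this
    norm_num at this
  have hXc : (X - C (c^2) : ℝ[X]) ≠ 0 := X_sub_C_ne_zero _
  have hXa : (X + C (a^2) : ℝ[X]) ≠ 0 := by
    have h : (X + C (a^2) : ℝ[X]) = X - C (-(a^2)) := by rw [map_neg, sub_neg_eq_add]
    rw [h]; exact X_sub_C_ne_zero _
  have hCk : (C (-(1/(c^2*a^4))) : ℝ[X]) ≠ 0 := by
    simpa using hk
  have hmXa : rootMultiplicity (c^2) (X + C (a^2) : ℝ[X]) = 0 := by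
    apply rootMultiplicity_eq_zero
    simp only [IsRoot, eval_add, eval_X, eval_C]
    positivity
  -- total multiplicity
  have hmult : (fpoly a c r xc yc 0).rootMultiplicity (c^2)
      = 1 + Q.rootMultiplicity (c^2) := by
    rw [hfac]
    rw [rootMultiplicity_mul (mul_ne_zero hCk (mul_ne_zero hXc (mul_ne_zero hXa hQ0))),
      rootMultiplicity_mul (mul_ne_zero hXc (mul_ne_zero hXa hQ0)),
      rootMultiplicity_mul (mul_ne_zero hXa hQ0),
      rootMultiplicity_C, rootMultiplicity_X_sub_C_self, hmXa]
    omega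
  have hac : (a^2 + c^2 : ℝ) ≠ 0 := by positivity
  have hevalQ : eval (c^2) Q = -(a^2*r^2) + (xc^2+yc^2-r^2-a^2)*c^2 - (c^2)^2 := by
    simp [hQdef]
  have hroot_iff : Q.IsRoot (c^2) ↔ r^2 = -c^2 + c^2 * (xc^2 + yc^2) / (a^2 + c^2) := by
    rw [IsRoot, hevalQ]
    constructor
    · intro h
      field_simp
      nlinarith [h]
    · intro h
      field_simp at h
      nlinarith [h]
  constructor
  · rw [hmult, ← hroot_iff, ← rootMultiplicity_pos hQ0]
    omega
  · intro h
    -- factor Q under hypothesis h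
    have hs : (xc^2 + yc^2) * c^2 = (r^2 + c^2) * (a^2 + c^2) := by
      field_simp at h
      nlinarith [h]
    have hQfac : Q = C (-1 : ℝ) * ((X - C (c^2)) * (X - C (a^2*r^2/c^2))) := by
      apply Polynomial.funext; intro x
      simp only [hQdef, eval_mul, eval_sub, eval_add, eval_neg, eval_pow, eval_X, eval_C]
      have hc2 : (c:ℝ)^2 ≠ 0 := by positivity
      field_simp
      linear_combination x * hs
    have hCm1 : (C (-1 : ℝ) : ℝ[X]) ≠ 0 := C_ne_zero.mpr (by norm_num)
    by_cases hct : (a^2*r^2/c^2 : ℝ) = c^2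
    · rw [hct] at hQfac
      have hQm : Q.rootMultiplicity (c^2) = 2 := by
        rw [hQfac,
          rootMultiplicity_mul (mul_ne_zero hCm1 (mul_ne_zero hXc hXc)),
          rootMultiplicity_mul (mul_ne_zero hXc hXc),
          rootMultiplicity_C, rootMultiplicity_X_sub_C_self]
      have har : c^2 = a * r := by
        have h4 : a^2 * r^2 = (c^2)^2 := by
          field_simp at hct
          linear_combination hct
        have h5 : (a*r - c^2) * (a*r + c^2) = 0 := by linear_combination h4
        rcases mul_eq_zero.mp h5 with h6 | h6
        · linarith
        · nlinarith [mul_pos ha hr]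
      rw [hmult, hQm]
      exact iff_of_true rfl har
    · have hQm : Q.rootMultiplicity (c^2) = 1 := by
        have hXt : (X - C (a^2*r^2/c^2) : ℝ[X]) ≠ 0 := X_sub_C_ne_zero _
        rw [hQfac,
          rootMultiplicity_mul (mul_ne_zero hCm1 (mul_ne_zero hXc hXt)),
          rootMultiplicity_mul (mul_ne_zero hXc hXt),
          rootMultiplicity_C, rootMultiplicity_X_sub_C_self,
          rootMultiplicity_eq_zero (by
            simp only [IsRoot, eval_sub, eval_X, eval_C]
            exact sub_ne_zero.mpr (Ne.symm hct))]
      rw [hmult, hQm]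
      constructor
      · intro h23; omega
      · intro har
        exfalso
        apply hct
        field_simp
        nlinarith [har, mul_pos ha hr]
end

section
/- Suppose x_c = y_c = 0 and r < a. Then the negative root λ₃ = (c² − r² + z_c² − √((c² − r² + z_c²)² + 4c²r²))/2 of the characteristic polynomial satisfies −a² < λ₃ < 0. (Hint: λ₃ is increasing in z_c², and at z_c = 0 one has λ₃ = −r² > −a².) -/
open Matrix Polynomial

lemma fval_factor (a c r zc l : ℝ) (ha : a ≠ 0) (hc : c ≠ 0) :
    fval a c r 0 0 zc l
      = (l/a^2+1)^2 * (((c^2-l)*(zc^2-r^2-l) - c^2*zc^2)/c^2) := by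
  unfold fval
  simp [Hmat, Smat, Matrix.det_succ_row_zero, Fin.sum_univ_succ]
  field_simp
  ring

theorem stmt10 (a c r zc : ℝ) (ha : 0 < a) (hc : 0 < c) (hr : 0 < r) (hra : r < a) :
    (let l3 : ℝ := (c^2 - r^2 + zc^2 - Real.sqrt ((c^2 - r^2 + zc^2)^2 + 4*c^2*r^2)) / 2
     fval a c r 0 0 zc l3 = 0 ∧ -a^2 < l3 ∧ l3 < 0) := by
  intro l3
  have hDpos : (0:ℝ) < (c^2 - r^2 + zc^2)^2 + 4*c^2*r^2 := by
    nlinarith [sq_nonneg (c^2 - r^2 + zc^2), mul_pos hc hr]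
  have hs : Real.sqrt ((c^2 - r^2 + zc^2)^2 + 4*c^2*r^2) ^ 2
      = (c^2 - r^2 + zc^2)^2 + 4*c^2*r^2 := Real.sq_sqrt hDpos.le
  have hsnn : 0 ≤ Real.sqrt ((c^2 - r^2 + zc^2)^2 + 4*c^2*r^2) := Real.sqrt_nonneg _
  have har : r^2 < a^2 := by nlinarith
  refine ⟨?_, ?_, ?_⟩
  · rw [fval_factor a c r zc l3 ha.ne' hc.ne']
    have hq : (c^2 - l3)*(zc^2 - r^2 - l3) - c^2*zc^2 = 0 := by
      show (c^2 - (c^2 - r^2 + zc^2 - Real.sqrt ((c^2 - r^2 + zc^2)^2 + 4*c^2*r^2)) / 2) *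
        (zc^2 - r^2 - (c^2 - r^2 + zc^2 - Real.sqrt ((c^2 - r^2 + zc^2)^2 + 4*c^2*r^2)) / 2)
        - c^2*zc^2 = 0
      linear_combination (1/4 : ℝ) * hs
    rw [hq]
    simp
  · -- -a^2 < l3
    have hy : 0 < (c^2 - r^2 + zc^2) + 2*a^2 := by nlinarith [sq_nonneg zc]
    have hkey : Real.sqrt ((c^2 - r^2 + zc^2)^2 + 4*c^2*r^2)
        < (c^2 - r^2 + zc^2) + 2*a^2 := by
      rw [Real.sqrt_lt' hy]
      nlinarith [sq_nonneg zc, mul_pos (pow_pos hc 2) (sub_pos.mpr har),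
        mul_pos (pow_pos ha 2) (sub_pos.mpr har),
        mul_nonneg (pow_pos ha 2).le (sq_nonneg zc)]
    show -a^2 < (c^2 - r^2 + zc^2 - Real.sqrt ((c^2 - r^2 + zc^2)^2 + 4*c^2*r^2)) / 2
    linarith
  · -- l3 < 0
    have ht : c^2 - r^2 + zc^2 < Real.sqrt ((c^2 - r^2 + zc^2)^2 + 4*c^2*r^2) := by
      rcases le_or_gt (c^2 - r^2 + zc^2) 0 with h | h
      · exact lt_of_le_of_lt h (Real.sqrt_pos.mpr hDpos)
      · have h2 : c^2 - r^2 + zc^2 = Real.sqrt ((c^2 - r^2 + zc^2)^2) := by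
          rw [Real.sqrt_sq h.le]
        rw [h2]
        exact Real.sqrt_lt_sqrt (sq_nonneg _) (by nlinarith [mul_pos hc hr])
    show (c^2 - r^2 + zc^2 - Real.sqrt ((c^2 - r^2 + zc^2)^2 + 4*c^2*r^2)) / 2 < 0
    linarith
end

section
/- Suppose z_c = 0, r² = −c² + c²ρ_c²/(a² + c²), and ρ = a²ρ_c/(a² + c²). Then the normal direction (ρ/a², −z/c²) to the hyperbola ρ²/a² − z²/c² = 1 and the normal direction (ρ − ρ_c, z) to the circle (ρ − ρ_c)² + z² = r² are parallel at any common point (ρ, z); i.e., (ρ/a²)·z − (−z/c²)·(ρ − ρ_c) = 0. -/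
theorem stmt13 (a c r ρc : ℝ) (ha : 0 < a) (hc : 0 < c) (hr : 0 < r) (hρ : 0 < ρc)
    (hrad : r^2 = -c^2 + c^2 * ρc^2 / (a^2 + c^2)) :
    ∀ ρ z : ℝ, ρ = a^2 * ρc / (a^2 + c^2) →
      ρ^2 / a^2 - z^2 / c^2 = 1 → (ρ - ρc)^2 + z^2 = r^2 →
      (ρ / a^2) * z - (-(z / c^2)) * (ρ - ρc) = 0 := by
  intro ρ z hρeq _ _
  subst hρeq
  have h1 : a^2 ≠ 0 := by positivity
  have h2 : c^2 ≠ 0 := by positivity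
  have h3 : a^2 + c^2 ≠ 0 := by positivity
  field_simp
  ring
end

section
/- Let λ ∉ {−a², c²} be a real root of f(λ) = det(λH + S). Then rank(λH + S) = 3, so the eigenspace ker(λ·I + H⁻¹S) is one-dimensional. -/
open Matrix Polynomial

theorem stmt16 (a c r xc yc zc l : ℝ) (ha : 0 < a) (hc : 0 < c) (hr : 0 < r)
    (hroot : fval a c r xc yc zc l = 0) (h1 : l ≠ -a^2) (h2 : l ≠ c^2) :
    (l • Hmat a c + Smat r xc yc zc).rank = 3 ∧
    Module.finrank ℝ
      (LinearMap.ker (Matrix.toLin'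
        (l • (1 : Matrix (Fin 4) (Fin 4) ℝ) + (Hmat a c)⁻¹ * Smat r xc yc zc))) = 1 := by
  have ha2 : a^2 ≠ 0 := by positivity
  have hc2 : c^2 ≠ 0 := by positivity
  set M : Matrix (Fin 4) (Fin 4) ℝ := l • Hmat a c + Smat r xc yc zc with hMdef
  have hα : l * (1/a^2) + 1 ≠ 0 := by
    intro h; apply h1; field_simp at h; linarith
  have hβ : l * -(1/c^2) + 1 ≠ 0 := by
    intro h; apply h2; field_simp at h; linarith
  -- the kernel of M
  set K := LinearMap.ker M.mulVecLin with hK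
  set w : Fin 4 → ℝ := ![xc/(l*(1/a^2)+1), yc/(l*(1/a^2)+1), zc/(l*(-(1/c^2))+1), 1] with hw
  have hwne : w ≠ 0 := by
    intro h
    have := congrFun h 3
    simp [hw] at this
  have hKle : K ≤ Submodule.span ℝ {w} := by
    intro v hv
    simp only [hK, LinearMap.mem_ker, mulVecLin_apply] at hv
    have e0 := congrFun hv 0
    have e1 := congrFun hv 1
    have e2 := congrFun hv 2
    simp [Matrix.mulVec, dotProduct, Fin.sum_univ_four, hMdef, Hmat, Smat] at e0 e1 e2
    rw [Submodule.mem_span_singleton]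
    refine ⟨v 3, ?_⟩
    funext i
    have hla : l + a^2 ≠ 0 := fun h => h1 (by linarith)
    have hlc : -l + c^2 ≠ 0 := fun h => h2 (by linarith)
    field_simp at e0 e1 e2
    fin_cases i <;> simp [hw] <;> field_simp <;> linarith
  have hfinK_le : Module.finrank ℝ K ≤ 1 := by
    calc Module.finrank ℝ K ≤ Module.finrank ℝ (Submodule.span ℝ {w}) :=
      Submodule.finrank_mono hKle
    _ = 1 := finrank_span_singleton hwne
  have hdet0 : M.det = 0 := hroot
  obtain ⟨v, hvne, hv0⟩ := (Matrix.exists_mulVec_eq_zero_iff).mpr hdet0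
  have hfinK_pos : 0 < Module.finrank ℝ K := by
    rw [Module.finrank_pos_iff_exists_ne_zero]
    refine ⟨⟨v, ?_⟩, ?_⟩
    · simp [hK, mulVecLin_apply, hv0]
    · simp [Submodule.mk_eq_zero]; exact hvne
  have hfinK : Module.finrank ℝ K = 1 := le_antisymm hfinK_le hfinK_pos
  have hrn := LinearMap.finrank_range_add_finrank_ker M.mulVecLin
  rw [hfinK] at hrn
  simp [Module.finrank_pi] at hrn
  have hrank : M.rank = 3 := by
    rw [Matrix.rank]
    omega
  refine ⟨hrank, ?_⟩
  -- second part
  have hHdet : IsUnit (Hmat a c).det := by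
    have : (Hmat a c).det = 1/(a^4*c^2) := by
      simp [Hmat, Matrix.det_succ_row_zero, Fin.sum_univ_succ]
      field_simp
    rw [this]
    exact isUnit_iff_ne_zero.mpr (by positivity)
  have hfac : l • (1 : Matrix (Fin 4) (Fin 4) ℝ) + (Hmat a c)⁻¹ * Smat r xc yc zc
      = (Hmat a c)⁻¹ * M := by
    rw [hMdef, Matrix.mul_add, Matrix.mul_smul, Matrix.nonsing_inv_mul _ hHdet]
  rw [hfac]
  have : Matrix.toLin' ((Hmat a c)⁻¹ * M) = ((Hmat a c)⁻¹).mulVecLin ∘ₗ M.mulVecLin := by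
    ext v i
    simp [Matrix.toLin'_apply, Matrix.mulVecLin_apply, Matrix.mulVec_mulVec]
  rw [this, LinearMap.ker_comp]
  have hinj : LinearMap.ker ((Hmat a c)⁻¹).mulVecLin = ⊥ := by
    rw [LinearMap.ker_eq_bot]
    exact Matrix.mulVec_injective_iff_isUnit.mpr (Matrix.isUnit_nonsing_inv_iff.mpr
      ((Matrix.isUnit_iff_isUnit_det _).mpr hHdet))
  rw [hinj, Submodule.comap_bot]
  exact hfinK
end

section
/- Let H, S be real symmetric 4×4 matrices with H invertible. Suppose there exists a nonzero real vector X₀ and α₀ ∈ ℝ with X₀ᵗHX₀ = 0, X₀ᵗSX₀ = 0, and SX₀ = −α₀HX₀ (tangency). If det(λH + S), viewed as a polynomial of degree 4 in λ, has four distinct roots (all real, or two real and two complex conjugate), then a contradiction follows; hence det(λH + S) must have a multiple root. -/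
open Matrix Polynomial

lemma adj_mulVec_eq_zero (N : Matrix (Fin 4) (Fin 4) ℝ) (hNs : N.IsSymm)
    (X₀ : Fin 4 → ℝ) (hX₀ : X₀ ≠ 0) (hker : N.mulVec X₀ = 0)
    (w : Fin 4 → ℝ) (hw : X₀ ⬝ᵥ w = 0) : N.adjugate.mulVec w = 0 := by
  have hdet : N.det = 0 := by
    by_contra h
    have hu : IsUnit N.det := isUnit_iff_ne_zero.mpr h
    apply hX₀
    calc X₀ = (N⁻¹ * N).mulVec X₀ := by rw [Matrix.nonsing_inv_mul N hu, Matrix.one_mulVec]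
    _ = N⁻¹.mulVec (N.mulVec X₀) := by rw [Matrix.mulVec_mulVec]
    _ = 0 := by rw [hker, Matrix.mulVec_zero]
  have hNadj : ∀ v, N.mulVec (N.adjugate.mulVec v) = 0 := fun v => by
    rw [Matrix.mulVec_mulVec, Matrix.mul_adjugate, hdet, zero_smul, Matrix.zero_mulVec]
  by_cases hc : ∀ v, N.mulVec v = 0 → ∃ c : ℝ, v = c • X₀
  · obtain ⟨c, hcv⟩ := hc _ (hNadj w)
    obtain ⟨c', hcv'⟩ := hc _ (hNadj X₀)
    have hsym : N.adjugateᵀ = N.adjugate := by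
      rw [Matrix.adjugate_transpose, hNs.eq]
    have hdot : X₀ ⬝ᵥ N.adjugate.mulVec w = c' * (X₀ ⬝ᵥ w) := by
      rw [Matrix.dotProduct_mulVec, ← Matrix.mulVec_transpose, hsym, hcv',
        smul_dotProduct, smul_eq_mul]
    rw [hcv, dotProduct_smul, smul_eq_mul, hw, mul_zero] at hdot
    have hcz : c = 0 := by
      rcases mul_eq_zero.mp hdot with h | h
      · exact h
      · exact absurd (dotProduct_self_eq_zero.mp h) hX₀
    rw [hcv, hcz, zero_smul]
  · push_neg at hc
    obtain ⟨y, hy1, hy2⟩ := hc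
    suffices hadj : N.adjugate = 0 by rw [hadj, Matrix.zero_mulVec]
    ext i j
    rw [Matrix.adjugate_apply, Matrix.zero_apply]
    have hz : ∃ z : Fin 4 → ℝ, z ≠ 0 ∧ z i = 0 ∧ N.mulVec z = 0 := by
      by_cases hXi : X₀ i = 0
      · exact ⟨X₀, hX₀, hXi, hker⟩
      · refine ⟨y i • X₀ - X₀ i • y, ?_, ?_, ?_⟩
        · intro h
          have h' : y i • X₀ = X₀ i • y := sub_eq_zero.mp h
          exact hy2 ((X₀ i)⁻¹ * y i) (by
            rw [mul_smul, h', smul_smul, inv_mul_cancel₀ hXi, one_smul])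
        · simp [smul_eq_mul]; ring
        · rw [Matrix.mulVec_sub, Matrix.mulVec_smul, Matrix.mulVec_smul, hker, hy1,
            smul_zero, smul_zero, sub_zero]
    obtain ⟨z, hz0, hzi, hzN⟩ := hz
    set B := N.updateRow j (Pi.single i 1) with hB
    have hBz : B.mulVec z = 0 := by
      funext k
      rw [hB]
      by_cases hk : k = j
      · subst hk
        simp [Matrix.mulVec, dotProduct, Matrix.updateRow_self, Pi.single_apply, hzi]
      · have hrow : (N.updateRow j (Pi.single i 1)).mulVec z k = N.mulVec z k := by
          simp only [Matrix.mulVec, dotProduct]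
          exact Finset.sum_congr rfl fun l _ => by rw [Matrix.updateRow_ne hk]
        rw [hrow, hzN]
    by_contra hdB
    have hu : IsUnit B.det := isUnit_iff_ne_zero.mpr hdB
    apply hz0
    calc z = (B⁻¹ * B).mulVec z := by rw [Matrix.nonsing_inv_mul B hu, Matrix.one_mulVec]
    _ = B⁻¹.mulVec (B.mulVec z) := by rw [Matrix.mulVec_mulVec]
    _ = 0 := by rw [hBz, Matrix.mulVec_zero]

theorem stmt18 (H S : Matrix (Fin 4) (Fin 4) ℝ) (hH : H.IsSymm) (hS : S.IsSymm)
    (hHinv : IsUnit H.det)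
    (X₀ : Fin 4 → ℝ) (hX₀ : X₀ ≠ 0) (α₀ : ℝ)
    (htanH : X₀ ⬝ᵥ H.mulVec X₀ = 0) (htanS : X₀ ⬝ᵥ S.mulVec X₀ = 0)
    (htan : S.mulVec X₀ = -α₀ • H.mulVec X₀) :
    ∃ μ : ℂ,
      2 ≤ ((((X : Polynomial ℝ) • H.map C + S.map C).det).map
            (algebraMap ℝ ℂ)).rootMultiplicity μ := by
  classical
  set M : Matrix (Fin 4) (Fin 4) ℝ[X] := (X : ℝ[X]) • H.map C + S.map C with hM
  set N : Matrix (Fin 4) (Fin 4) ℝ := α₀ • H + S with hN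
  have hNs : N.IsSymm := by
    rw [Matrix.IsSymm, hN, Matrix.transpose_add, Matrix.transpose_smul, hH.eq, hS.eq]
  have hkerN : N.mulVec X₀ = 0 := by
    rw [hN, Matrix.add_mulVec, Matrix.smul_mulVec, htan]
    funext k; simp [neg_smul]
  -- polynomial vectors
  set X₀' : Fin 4 → ℝ[X] := fun k => C (X₀ k) with hX₀'
  set w' : Fin 4 → ℝ[X] := fun k => C (H.mulVec X₀ k) with hw'
  have hmapmul : ∀ (A : Matrix (Fin 4) (Fin 4) ℝ) (v : Fin 4 → ℝ),
      (A.map C).mulVec (fun k => C (v k)) = fun k => C (A.mulVec v k) := by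
    intro A v
    funext k
    simp only [Matrix.mulVec, dotProduct, Matrix.map_apply, ← C_mul, ← map_sum]
  have hMX : M.mulVec X₀' = ((X : ℝ[X]) - C α₀) • w' := by
    rw [hM, Matrix.add_mulVec, Matrix.smul_mulVec, hX₀', hmapmul, hmapmul, htan]
    funext k
    simp only [Pi.add_apply, Pi.smul_apply, smul_eq_mul, hw', C_neg, C_mul, sub_mul]
    ring
  set u : Fin 4 → ℝ[X] := M.adjugate.mulVec w' with hu
  have hkey : ∀ k, ((X : ℝ[X]) - C α₀) * u k = M.det * X₀' k := by
    have h1 : M.adjugate.mulVec (M.mulVec X₀') = M.det • X₀' := by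
      rw [Matrix.mulVec_mulVec, Matrix.adjugate_mul, Matrix.smul_mulVec,
        Matrix.one_mulVec]
    rw [hMX, Matrix.mulVec_smul] at h1
    intro k
    have := congrFun h1 k
    simpa using this
  -- evaluation at α₀
  have hevalM : M.map (evalRingHom α₀) = N := by
    funext i j
    simp [hM, hN, Matrix.map_apply, Matrix.add_apply, Matrix.smul_apply, smul_eq_mul]
    ring
  have hevalu : ∀ k, (u k).eval α₀ = 0 := by
    have hzero : N.adjugate.mulVec (H.mulVec X₀) = 0 :=
      adj_mulVec_eq_zero N hNs X₀ hX₀ hkerN _ htanH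
    have hadj : (M.map (evalRingHom α₀)).adjugate = M.adjugate.map (evalRingHom α₀) := by
      have h := RingHom.map_adjugate (evalRingHom α₀) M
      simpa [RingHom.mapMatrix_apply] using h.symm
    intro k
    have : (u k).eval α₀ = N.adjugate.mulVec (H.mulVec X₀) k := by
      rw [hu]
      simp only [Matrix.mulVec, dotProduct]
      rw [← hevalM, hadj]
      simp only [eval_finset_sum, eval_mul, eval_C, Matrix.map_apply, hw',
        coe_evalRingHom]
      rfl
    rw [this, hzero]
    rfl
  -- divisibility
  obtain ⟨j, hj⟩ : ∃ j, X₀ j ≠ 0 := by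
    by_contra h; push_neg at h; exact hX₀ (funext h)
  obtain ⟨s, hs⟩ : ((X : ℝ[X]) - C α₀) ∣ u j := dvd_iff_isRoot.mpr (hevalu j)
  have hdvd : ((X : ℝ[X]) - C α₀) ^ 2 ∣ M.det := by
    refine ⟨s * C (X₀ j)⁻¹, ?_⟩
    have h2 : M.det * C (X₀ j) = ((X : ℝ[X]) - C α₀) ^ 2 * s := by
      rw [← hkey j, hs]; ring
    have h3 := congrArg (· * C (X₀ j)⁻¹) h2
    rw [mul_assoc, ← C_mul, mul_inv_cancel₀ hj, C_1, mul_one] at h3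
    rw [h3]; ring
  -- M.det ≠ 0
  have hMdet : M.det ≠ 0 := by
    have hfac : M = H.map C * ((X : ℝ[X]) • 1 + (H⁻¹ * S).map C) := by
      rw [Matrix.mul_add, Matrix.mul_smul, Matrix.mul_one, ← Matrix.map_mul,
        ← Matrix.mul_assoc, Matrix.mul_nonsing_inv H hHinv, Matrix.one_mul, hM]
    have hcp : ((X : ℝ[X]) • 1 + (H⁻¹ * S).map C) = charmatrix (-(H⁻¹ * S)) := by
      funext i j
      rw [Matrix.add_apply, Matrix.smul_apply, Matrix.map_apply]
      by_cases h : i = j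
      · subst h
        rw [charmatrix_apply_eq, Matrix.one_apply_eq, smul_eq_mul, mul_one,
          Matrix.neg_apply, map_neg, sub_neg_eq_add, add_comm]
      · rw [charmatrix_apply_ne _ _ _ h, Matrix.one_apply_ne h, smul_zero, zero_add,
          Matrix.neg_apply, map_neg, neg_neg]
    rw [hfac, Matrix.det_mul, hcp]
    have h1 : (H.map (C : ℝ →+* ℝ[X])).det = C H.det := by
      simpa [RingHom.mapMatrix_apply] using (RingHom.map_det (C : ℝ →+* ℝ[X]) H).symm
    have h2 : (charmatrix (-(H⁻¹ * S))).det = (-(H⁻¹ * S)).charpoly := rfl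
    rw [h1, h2]
    apply mul_ne_zero
    · exact C_ne_zero.mpr hHinv.ne_zero
    · exact (Matrix.charpoly_monic _).ne_zero
  -- conclude
  refine ⟨(algebraMap ℝ ℂ) α₀, ?_⟩
  rw [Polynomial.le_rootMultiplicity_iff]
  · obtain ⟨r, hr⟩ := hdvd
    refine ⟨r.map (algebraMap ℝ ℂ), ?_⟩
    have := congrArg (Polynomial.map (algebraMap ℝ ℂ)) hr
    rwa [Polynomial.map_mul, Polynomial.map_pow, Polynomial.map_sub, Polynomial.map_X,
      Polynomial.map_C] at this
  · exact (Polynomial.map_ne_zero_iff (algebraMap ℝ ℂ).injective).mpr hMdet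
end

section
/- Let the sphere of radius r < 2a be centered at (a, 0, 0). Then the roots of f(λ) = det(λH + S) are −a², c², and λ_± = (−r² ± r√(r² − 4a²))/2; in particular λ_± are non-real complex conjugates. -/
open Matrix Polynomial

set_option maxRecDepth 10000
set_option maxHeartbeats 1000000

lemma det4 (a11 a12 a13 a14 a21 a22 a23 a24 a31 a32 a33 a34 a41 a42 a43 a44 : ℂ) :
    (!![a11,a12,a13,a14; a21,a22,a23,a24; a31,a32,a33,a34; a41,a42,a43,a44]).det
    = a11*(a22*(a33*a44-a34*a43) - a23*(a32*a44-a34*a42) + a24*(a32*a43-a33*a42))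
      - a12*(a21*(a33*a44-a34*a43) - a23*(a31*a44-a34*a41) + a24*(a31*a43-a33*a41))
      + a13*(a21*(a32*a44-a34*a42) - a22*(a31*a44-a34*a41) + a24*(a31*a42-a32*a41))
      - a14*(a21*(a32*a43-a33*a42) - a22*(a31*a43-a33*a41) + a23*(a31*a42-a32*a41)) := by
  simp [Matrix.det_succ_row_zero, Fin.sum_univ_succ, Fin.succAbove, Fin.lt_def,
    Fin.castSucc, Fin.castAdd, Fin.castLE, -Fin.val_fin_lt, -Fin.lt_def]
  ring

lemma eval_fpoly (a c r xc yc zc : ℝ) (z : ℂ) :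
    ((fpoly a c r xc yc zc).map (algebraMap ℝ ℂ)).eval z
    = (z • (Hmat a c).map (Complex.ofReal) + (Smat r xc yc zc).map Complex.ofReal).det := by
  rw [fpoly, eval_map, ← coe_eval₂RingHom, RingHom.map_det]
  congr 1
  ext i j
  simp only [RingHom.mapMatrix_apply, Matrix.map_apply, Matrix.add_apply, Matrix.smul_apply,
    smul_eq_mul, coe_eval₂RingHom, eval₂_add, eval₂_mul, eval₂_X, eval₂_C]
  rfl

lemma det_form (a c r : ℝ) (z : ℂ) (ha : (a:ℂ) ≠ 0) :
    ((fpoly a c r a 0 0).map (algebraMap ℝ ℂ)).eval z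
    = (z/(a:ℂ)^2 + 1) * ((-(z/(c:ℂ)^2) + 1)) * (-(z^2 + (r:ℂ)^2*z + (a:ℂ)^2*(r:ℂ)^2)/(a:ℂ)^2) := by
  rw [eval_fpoly]
  have hM : z • (Hmat a c).map (Complex.ofReal) + (Smat r a 0 0).map Complex.ofReal
      = !![z/(a:ℂ)^2+1, 0, 0, -(a:ℂ); 0, z/(a:ℂ)^2+1, 0, 0; 0, 0, -(z/(c:ℂ)^2)+1, 0;
           -(a:ℂ), 0, 0, -z + (a:ℂ)^2 - (r:ℂ)^2] := by
    ext i j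
    fin_cases i <;> fin_cases j <;>
      (simp [Hmat, Smat, Matrix.vecHead, Matrix.vecTail]; try push_cast) <;> try ring
  rw [hM, det4]
  field_simp
  ring

theorem stmt19 (a c r : ℝ) (ha : 0 < a) (hc : 0 < c) (hr : 0 < r) (hr2a : r < 2*a) :
    (let P : Polynomial ℂ := (fpoly a c r a 0 0).map (algebraMap ℝ ℂ)
     let lp : ℂ := (-(r^2 : ℂ) + r * Complex.I * Real.sqrt (4*a^2 - r^2)) / 2
     let lm : ℂ := (-(r^2 : ℂ) - r * Complex.I * Real.sqrt (4*a^2 - r^2)) / 2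
     P.eval (-(a^2 : ℂ)) = 0 ∧ P.eval ((c^2 : ℂ)) = 0 ∧
     P.eval lp = 0 ∧ P.eval lm = 0 ∧
     lp.im ≠ 0 ∧ lm = (starRingEnd ℂ) lp) := by
  intro P lp lm
  have haC : (a:ℂ) ≠ 0 := by exact_mod_cast ha.ne'
  have hcC : (c:ℂ) ≠ 0 := by exact_mod_cast hc.ne'
  have hpos : 0 < 4*a^2 - r^2 := by nlinarith
  have hs : ((Real.sqrt (4*a^2 - r^2) : ℝ) : ℂ)^2 = 4*(a:ℂ)^2 - (r:ℂ)^2 := by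
    rw [← Complex.ofReal_pow, Real.sq_sqrt hpos.le]
    push_cast; ring
  have hquad : ∀ z : ℂ, z^2 + (r:ℂ)^2*z + (a:ℂ)^2*(r:ℂ)^2 = 0 → P.eval z = 0 := by
    intro z hz
    rw [show P = (fpoly a c r a 0 0).map (algebraMap ℝ ℂ) from rfl, det_form a c r z haC, hz]
    simp
  have hlp : lp^2 + (r:ℂ)^2*lp + (a:ℂ)^2*(r:ℂ)^2 = 0 := by
    show ((-(r^2 : ℂ) + r * Complex.I * Real.sqrt (4*a^2 - r^2)) / 2)^2 + _ + _ = 0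
    have hI := Complex.I_sq
    linear_combination ((r:ℂ)^2 * ((Real.sqrt (4*a^2 - r^2) : ℝ) : ℂ)^2 / 4) * hI
      - ((r:ℂ)^2/4) * hs
  have hlm : lm^2 + (r:ℂ)^2*lm + (a:ℂ)^2*(r:ℂ)^2 = 0 := by
    show ((-(r^2 : ℂ) - r * Complex.I * Real.sqrt (4*a^2 - r^2)) / 2)^2 + _ + _ = 0
    have hI := Complex.I_sq
    linear_combination ((r:ℂ)^2 * ((Real.sqrt (4*a^2 - r^2) : ℝ) : ℂ)^2 / 4) * hI
      - ((r:ℂ)^2/4) * hs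
  refine ⟨?_, ?_, hquad lp hlp, hquad lm hlm, ?_, ?_⟩
  · rw [show P = (fpoly a c r a 0 0).map (algebraMap ℝ ℂ) from rfl, det_form a c r _ haC]
    have : (-(a^2:ℂ))/(a:ℂ)^2 + 1 = 0 := by field_simp; ring
    rw [this]; ring
  · rw [show P = (fpoly a c r a 0 0).map (algebraMap ℝ ℂ) from rfl, det_form a c r _ haC]
    have : -((c^2:ℂ)/(c:ℂ)^2) + 1 = 0 := by field_simp; ring
    rw [this]; ring
  · have him : lp.im = r * Real.sqrt (4*a^2 - r^2) / 2 := by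
      show ((-(r^2 : ℂ) + r * Complex.I * Real.sqrt (4*a^2 - r^2)) / 2).im = _
      simp [Complex.div_im, Complex.add_im, Complex.mul_im, Complex.mul_re, ← Complex.ofReal_pow]
    rw [him]
    positivity
  · show (-(r^2 : ℂ) - r * Complex.I * Real.sqrt (4*a^2 - r^2)) / 2
      = (starRingEnd ℂ) ((-(r^2 : ℂ) + r * Complex.I * Real.sqrt (4*a^2 - r^2)) / 2)
    simp [map_div₀, Complex.conj_I, map_ofNat, ← Complex.ofReal_pow]
    push_cast
    ring
end
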